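/- In every dimension d there exists a unit vector v ∈ C^d with |⟨e_j, v⟩|² = 1/d and |⟨F e_j, v⟩|² = 1/d for all j = 0,...,d−1, i.e., v is unbiased to both the computational basis and the Fourier basis; one may take v to be any eigenvector of XZ. -/

import Mathlib

open Matrix

/-- The discrete Fourier transform matrix `F_{jk} = ω^{jk}/√d`, `ω = e^{2πi/d}`. -/
noncomputable def Fmat (d : ℕ) : Matrix (Fin d) (Fin d) ℂ :=
  fun j k => Complex.exp (2 * Real.pi * Complex.I * ((j : ℕ) : ℂ) * ((k : ℕ) : ℂ) / d) /
    (Real.sqrt d : ℂ)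

noncomputable def ee (r : ℝ) : ℂ := Complex.exp (r * Complex.I)

lemma ee_add (a b : ℝ) : ee (a + b) = ee a * ee b := by
  simp [ee, add_mul, Complex.exp_add]

lemma ee_norm (a : ℝ) : ‖ee a‖ = 1 := by
  simp [ee, Complex.norm_exp_ofReal_mul_I]

lemma ee_conj (a : ℝ) : (starRingEnd ℂ) (ee a) = ee (-a) := by
  simp [ee, ← Complex.exp_conj]

lemma ee_mul_conj (a : ℝ) : ee a * (starRingEnd ℂ) (ee a) = 1 := by
  rw [ee_conj, ← ee_add]
  simp [ee]

lemma ee_int (m : ℤ) : ee (2 * Real.pi * m) = 1 := by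
  have := Complex.exp_int_mul_two_pi_mul_I m
  rw [ee, ← this]
  congr 1
  push_cast
  ring

lemma ee_pow (a : ℝ) (n : ℕ) : ee a ^ n = ee (n * a) := by
  rw [ee, ee, ← Complex.exp_nat_mul]
  congr 1
  push_cast; ring

/-- The phase function `ph d j n = e^{iπ((d+1)n² - 2nj)/d}`. -/
noncomputable def ph (d j n : ℕ) : ℂ :=
  ee ((Real.pi * ((d:ℝ)+1) * (n:ℝ)^2 - 2*Real.pi*(n:ℝ)*j)/d)

lemma ph_zero (d j : ℕ) : ph d j 0 = 1 := by
  simp [ph, ee]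

lemma ph_norm (d j n : ℕ) : ‖ph d j n‖ = 1 := ee_norm _

lemma ph_mul_conj (d j n : ℕ) : ph d j n * (starRingEnd ℂ) (ph d j n) = 1 :=
  ee_mul_conj _

lemma ph_periodic (d : ℕ) (hd : d ≠ 0) (j n : ℕ) : ph d j (n + d) = ph d j n := by
  obtain ⟨c, hc⟩ := Nat.even_mul_succ_self d
  have hc' : (d:ℝ) * ((d:ℝ)+1) = (c:ℝ) + c := by exact_mod_cast hc
  have hd0 : (d:ℝ) ≠ 0 := Nat.cast_ne_zero.mpr hd
  have key : ((Real.pi * ((d:ℝ)+1) * (↑(n+d):ℝ)^2 - 2*Real.pi*(↑(n+d):ℝ)*j)/d)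
      = ((Real.pi * ((d:ℝ)+1) * (n:ℝ)^2 - 2*Real.pi*(n:ℝ)*j)/d)
      + 2 * Real.pi * ((((d:ℤ)+1)*n - j + c : ℤ) : ℝ) := by
    rw [div_add' _ _ _ hd0, div_left_inj' hd0]
    push_cast
    linear_combination Real.pi * (d:ℝ) * hc'
  rw [ph, key, ee_add, ee_int, mul_one, ph]

lemma ph_mod (d : ℕ) (hd : d ≠ 0) (j n : ℕ) : ph d j (n % d) = ph d j n := by
  have H : ∀ q a, ph d j (a + d * q) = ph d j a := by
    intro q
    induction q with
    | zero => simp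
    | succ q ih =>
      intro a
      have : a + d * (q + 1) = (a + d * q) + d := by ring
      rw [this, ph_periodic d hd, ih]
  conv_rhs => rw [← Nat.mod_add_div n d]
  rw [H]

lemma ph_twist (d : ℕ) (hd : d ≠ 0) (j a b : ℕ) :
    ph d j (a + b) = ph d j a * ph d j b * ee (2 * Real.pi * a * b / d) := by
  have hd0 : (d:ℝ) ≠ 0 := Nat.cast_ne_zero.mpr hd
  have key : ((Real.pi * ((d:ℝ)+1) * (↑(a+b):ℝ)^2 - 2*Real.pi*(↑(a+b):ℝ)*j)/d)
      = ((Real.pi * ((d:ℝ)+1) * (a:ℝ)^2 - 2*Real.pi*(a:ℝ)*j)/d)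
      + (((Real.pi * ((d:ℝ)+1) * (b:ℝ)^2 - 2*Real.pi*(b:ℝ)*j)/d)
      + (2 * Real.pi * ((a*b : ℕ) : ℝ) + 2 * Real.pi * a * b / d)) := by
    push_cast
    field_simp
    ring
  rw [ph, key, ee_add, ee_add, ee_add, ← ph, ← ph]
  have : ee (2 * Real.pi * ((a*b : ℕ) : ℝ)) = 1 := by
    simpa using ee_int ((a*b : ℕ) : ℤ)
  rw [this, one_mul]
  ring

lemma geom_sum_ee (d : ℕ) (hd : d ≠ 0) (m : ℕ) (hm : m < d) :
    ∑ l : Fin d, ee (2 * Real.pi * l.val * m / d) =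
      if m = 0 then (d : ℂ) else 0 := by
  have hω : ∀ l : Fin d, ee (2 * Real.pi * l.val * m / d)
      = ee (2 * Real.pi * m / d) ^ (l.val) := by
    intro l
    rw [ee_pow]
    congr 1
    ring
  simp only [hω]
  rw [Fin.sum_univ_eq_sum_range (fun i => ee (2 * Real.pi * m / d) ^ i)]
  by_cases h0 : m = 0
  · simp [h0, ee]
  · rw [if_neg h0]
    set z := ee (2 * Real.pi * m / d) with hz
    have hzd : z ^ d = 1 := by
      rw [ee_pow]
      have : (d:ℝ) * (2 * Real.pi * m / d) = 2 * Real.pi * ((m:ℤ):ℝ) := by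
        push_cast
        field_simp
      rw [this]
      exact ee_int m
    have hzne : z ≠ 1 := by
      have hprim := Complex.isPrimitiveRoot_exp d hd
      have hzeq : z = Complex.exp (2 * Real.pi * Complex.I / d) ^ m := by
        rw [hz, ee, ← Complex.exp_nat_mul]
        congr 1
        push_cast
        ring
      rw [hzeq]
      exact hprim.pow_ne_one_of_pos_of_lt h0 hm
    rw [geom_sum_eq hzne, hzd, sub_self, zero_div]

lemma main_sum (d : ℕ) [NeZero d] (j : ℕ) :
    (∑ k : Fin d, ph d j k.val) * (starRingEnd ℂ) (∑ k : Fin d, ph d j k.val)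
      = (d : ℂ) := by
  have hd : d ≠ 0 := NeZero.ne d
  rw [map_sum, Finset.mul_sum]
  have step1 : ∀ l : Fin d,
      (∑ k : Fin d, ph d j k.val) * (starRingEnd ℂ) (ph d j l.val)
      = ∑ m : Fin d, ph d j m.val * ee (2 * Real.pi * l.val * m.val / d) := by
    intro l
    have reidx : (∑ k : Fin d, ph d j k.val)
        = ∑ m : Fin d, ph d j ((l + m : Fin d).val) :=
      (Equiv.sum_comp (Equiv.addLeft l) (fun k : Fin d => ph d j k.val)).symm
    rw [reidx, Finset.sum_mul]
    congr 1
    ext m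
    rw [Fin.val_add, ph_mod d hd, ph_twist d hd j l.val m.val]
    rw [mul_comm (ph d j l.val) (ph d j m.val), mul_assoc, mul_assoc,
      mul_comm (ee _) _, ← mul_assoc (ph d j l.val), ph_mul_conj, one_mul]
  simp only [step1]
  rw [Finset.sum_comm]
  have step2 : ∀ m : Fin d,
      (∑ l : Fin d, ph d j m.val * ee (2 * Real.pi * l.val * m.val / d))
      = if m = (0 : Fin d) then (d : ℂ) else 0 := by
    intro m
    rw [← Finset.mul_sum, geom_sum_ee d hd m.val m.isLt]
    by_cases h : m = 0
    · simp [h, ph_zero]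
    · have : m.val ≠ 0 := fun hv => h (Fin.ext hv)
      simp [this, h]
  simp only [step2]
  simp


lemma conj_Fmat (d : ℕ) (k j : Fin d) :
    (starRingEnd ℂ) (Fmat d k j)
      = ee (-(2 * Real.pi * k.val * j.val) / d) / ((Real.sqrt d : ℝ) : ℂ) := by
  rw [Fmat, map_div₀, ← Complex.exp_conj, Complex.conj_ofReal, ee]
  congr 1
  simp only [map_div₀, _root_.map_mul, Complex.conj_ofReal, Complex.conj_I, map_ofNat,
    Complex.conj_natCast]
  push_cast
  ring

lemma term_eq (d : ℕ) (hd : d ≠ 0) (k j : Fin d) :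
    (starRingEnd ℂ) (Fmat d k j) * (ph d 0 k.val / ((Real.sqrt d : ℝ) : ℂ))
      = ph d j.val k.val / (d : ℂ) := by
  have hdR : (0:ℝ) ≤ d := Nat.cast_nonneg d
  rw [conj_Fmat]
  have hsq : ((Real.sqrt d : ℝ) : ℂ) * ((Real.sqrt d : ℝ) : ℂ) = (d : ℂ) := by
    rw [← Complex.ofReal_mul, Real.mul_self_sqrt hdR]
    simp
  have hmul : ee (-(2 * Real.pi * k.val * j.val) / d) * ph d 0 k.val
      = ph d j.val k.val := by
    rw [ph, ← ee_add, ph]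
    congr 1
    have hd0 : (d:ℝ) ≠ 0 := Nat.cast_ne_zero.mpr hd
    field_simp
    ring_nf
  rw [div_mul_div_comm, hmul, hsq]

theorem exists_unbiased_to_id_and_fourier (d : ℕ) [NeZero d] :
    ∃ v : Fin d → ℂ, (∑ j, ‖v j‖ ^ 2 = 1) ∧
      (∀ j, ‖v j‖ ^ 2 = 1 / d) ∧
      (∀ j, ‖∑ k, (starRingEnd ℂ) (Fmat d k j) * v k‖ ^ 2 = 1 / d) := by
  have hd : d ≠ 0 := NeZero.ne d
  have hd0 : (d:ℝ) ≠ 0 := Nat.cast_ne_zero.mpr hd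
  have hsqrt : ‖((Real.sqrt d : ℝ) : ℂ)‖ = Real.sqrt d := by
    rw [Complex.norm_real, Real.norm_eq_abs, _root_.abs_of_nonneg (Real.sqrt_nonneg d)]
  refine ⟨fun k => ph d 0 k.val / ((Real.sqrt d : ℝ) : ℂ), ?_, ?_, ?_⟩
  rotate_left
  · intro j
    rw [norm_div, ph_norm, hsqrt, div_pow, one_pow, Real.sq_sqrt (Nat.cast_nonneg d)]
  · intro j
    have hS := main_sum d j.val
    rw [Complex.mul_conj] at hS
    have hnSq : Complex.normSq (∑ k : Fin d, ph d j.val k.val) = d := by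
      exact_mod_cast hS
    have hterm : ∀ k : Fin d, (starRingEnd ℂ) (Fmat d k j)
        * (ph d 0 k.val / ((Real.sqrt d : ℝ) : ℂ)) = ph d j.val k.val / (d : ℂ) :=
      fun k => term_eq d hd k j
    simp only [hterm]
    rw [← Finset.sum_div, norm_div, div_pow, Complex.sq_norm,
      hnSq, Complex.norm_natCast]
    rw [sq]
    field_simp
  · have : ∀ j : Fin d, ‖ph d 0 j.val / ((Real.sqrt d : ℝ) : ℂ)‖ ^ 2 = 1/(d:ℝ) := by
      intro j
      rw [norm_div, ph_norm, hsqrt, div_pow, one_pow, Real.sq_sqrt (Nat.cast_nonneg d)]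
    simp only [this]
    rw [Finset.sum_const, Finset.card_univ, Fintype.card_fin, nsmul_eq_mul]
    field_simp
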